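/- Let $\mathfrak{p}$ be a partition of an even number $N$. Form the sequence of all odd parts of $\mathfrak{p}$ (there is an even number of them since $N$ is even), arranged decreasingly as $(p_1^*, \ldots, p_{2m}^*)$, apply operation $(\star)$ (replace each pair with $p_{2j-1}^* > p_{2j}^*$ by $(p_{2j-1}^*-1, p_{2j}^*+1)$), and recombine the results with the even parts of $\mathfrak{p}$, discarding zeros. Then the result is a partition of $N$ in which every odd part occurs with even multiplicity (i.e., the result is the Jordan type of a nilpotent orbit of type $C$). -/

import Mathlib

/-- The operation `(⋆)`: in a sequence read as consecutive pairs, every strictly decreasing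
pair `(a, b)` with `a > b` is replaced by `(a - 1, b + 1)`; all other entries are unchanged. -/
def starOp : List ℕ → List ℕ
  | a :: b :: rest => if b < a then (a - 1) :: (b + 1) :: starOp rest
                      else a :: b :: starOp rest
  | l => l

/-- The parts of a multiset listed in non-increasing order. -/
def descSort (s : Multiset ℕ) : List ℕ :=
  (Multiset.sort s (· ≤ ·)).reverse

/-- The `C`-collapse algorithm: apply `(⋆)` to the decreasing sequence of odd parts of `𝔭`,
recombine with the even parts, and discard zeros. -/
def cCollapse (p : Multiset ℕ) : Multiset ℕ :=
  ((starOp (descSort (p.filter (fun x => x % 2 = 1))) : List ℕ) : Multiset ℕ).filter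
      (fun x => 0 < x)
    + p.filter (fun x => x % 2 = 0)

/-- For a partition `𝔭` of an even number `N` (so that `𝔭` has an even number of odd parts),
the result of the `C`-collapse algorithm is a partition of `N` in which every odd part occurs
with even multiplicity (i.e. it is the Jordan type of a nilpotent orbit of type `C`). -/
lemma starOp_sum (l : List ℕ) : (starOp l).sum = l.sum := by
  induction l using starOp.induct with
  | case1 a b rest h ih => simp only [starOp, if_pos h, List.sum_cons, ih]; omega
  | case2 a b rest h ih => simp only [starOp, if_neg h, List.sum_cons, ih]
  | case3 l h =>
    match l, h with
    | [], _ => rfl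
    | [a], _ => rfl
    | a :: b :: r, h => exact absurd rfl (h a b r)

lemma starOp_count (l : List ℕ) (hodd : ∀ x ∈ l, x % 2 = 1)
    (hs : l.Pairwise (· ≥ ·)) (hlen : Even l.length) (v : ℕ) (hv : v % 2 = 1) :
    Even ((starOp l).count v) := by
  induction l using starOp.induct with
  | case1 a b rest h ih =>
    have ha : a % 2 = 1 := hodd a (by simp)
    have hb : b % 2 = 1 := hodd b (by simp)
    have h1 : a - 1 ≠ v := by omega
    have h2 : b + 1 ≠ v := by omega
    have ihr := ih (fun x hx => hodd x (by simp [hx]))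
      (hs.of_cons.of_cons) (by simpa [Nat.even_add_one, parity_simps] using hlen)
    simpa [starOp, if_pos h, List.count_cons, h1, h2] using ihr
  | case2 a b rest h ih =>
    have hab : a = b := by
      have h1 : b ≤ a := (List.pairwise_cons.mp hs).1 b (by simp)
      omega
    subst hab
    have ihr := ih (fun x hx => hodd x (by simp [hx]))
      (hs.of_cons.of_cons) (by simpa [Nat.even_add_one, parity_simps] using hlen)
    simp only [starOp, if_neg h, List.count_cons]
    rcases Decidable.em (a = v) with he | he <;>
      simp [he, parity_simps, ihr]
  | case3 l h =>
    match l, hlen, h with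
    | [], _, _ => simp [starOp]
    | [a], hlen, _ => simp at hlen
    | a :: b :: r, _, h => exact absurd rfl (h a b r)

lemma mod2_sum_card (s : Multiset ℕ) (h : ∀ x ∈ s, x % 2 = 1) :
    s.sum % 2 = Multiset.card s % 2 := by
  induction s using Multiset.induction_on with
  | empty => simp
  | cons a t ih =>
    have ha := h a (by simp)
    have ht := ih (fun x hx => h x (by simp [hx]))
    simp only [Multiset.sum_cons, Multiset.card_cons]
    omega

lemma even_msum (s : Multiset ℕ) (h : ∀ x ∈ s, x % 2 = 0) : s.sum % 2 = 0 := by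
  induction s using Multiset.induction_on with
  | empty => simp
  | cons a t ih =>
    have ha := h a (by simp)
    have ht := ih (fun x hx => h x (by simp [hx]))
    simp only [Multiset.sum_cons]
    omega

theorem stmt9 (N : ℕ) (hN : Even N) (p : Multiset ℕ)
    (hpos : ∀ x ∈ p, 0 < x) (hsum : p.sum = N) :
    (cCollapse p).sum = N ∧
    (∀ x ∈ cCollapse p, 0 < x) ∧
    (∀ x ∈ cCollapse p, Odd x → Even ((cCollapse p).count x)) := by
  set sOdd := p.filter (fun x => x % 2 = 1) with hsOdd
  set sEven := p.filter (fun x => x % 2 = 0) with hsEven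
  have hsplit : sOdd + sEven = p := by
    rw [hsOdd, hsEven]
    have h0 := Multiset.filter_add_not (fun x => x % 2 = 1) p
    have heq : p.filter (fun x => ¬ x % 2 = 1) = p.filter (fun x => x % 2 = 0) := by
      apply Multiset.filter_congr
      intro x _
      omega
    rw [heq] at h0
    exact h0
  have hds : ((descSort sOdd : List ℕ) : Multiset ℕ) = sOdd := by
    rw [descSort, Multiset.coe_reverse, Multiset.sort_eq]
  have hdsodd : ∀ x ∈ descSort sOdd, x % 2 = 1 := by
    intro x hx
    have hmem : x ∈ sOdd := by rw [← hds]; exact_mod_cast hx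
    exact (Multiset.mem_filter.mp hmem).2
  have hsorted : (descSort sOdd).Pairwise (· ≥ ·) := by
    rw [descSort, List.pairwise_reverse]
    exact Multiset.pairwise_sort (s := sOdd) (r := (· ≤ ·))
  have hlen : Even (descSort sOdd).length := by
    have hcard : ((descSort sOdd).length : ℕ) = Multiset.card sOdd := by
      rw [← Multiset.coe_card, hds]
    have h1 : sOdd.sum % 2 = Multiset.card sOdd % 2 :=
      mod2_sum_card _ (fun x hx => (Multiset.mem_filter.mp hx).2)
    have h2 : sEven.sum % 2 = 0 :=
      even_msum _ (fun x hx => (Multiset.mem_filter.mp hx).2)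
    have h3 : sOdd.sum + sEven.sum = N := by
      rw [← hsum, ← hsplit, Multiset.sum_add]
    have hN2 : N % 2 = 0 := Nat.even_iff.mp hN
    rw [Nat.even_iff, hcard]
    omega
  set L := starOp (descSort sOdd) with hL
  have hLodd : ∀ x ∈ L, x % 2 = 1 → x % 2 = 1 := fun _ _ h => h
  -- sum
  refine ⟨?_, ?_, ?_⟩
  · show (((L : Multiset ℕ).filter (fun x => 0 < x)) + sEven).sum = N
    have hz : ((L : Multiset ℕ).filter (fun x => ¬ 0 < x)).sum = 0 := by
      apply Multiset.sum_eq_zero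
      intro x hx
      have := (Multiset.mem_filter.mp hx).2
      omega
    have hfs : ((L : Multiset ℕ).filter (fun x => 0 < x)).sum = (L : Multiset ℕ).sum := by
      conv_rhs => rw [← Multiset.filter_add_not (fun x => 0 < x) (L : Multiset ℕ)]
      rw [Multiset.sum_add, hz, add_zero]
    rw [Multiset.sum_add, hfs]
    have hLsum : (L : Multiset ℕ).sum = sOdd.sum := by
      rw [Multiset.sum_coe, hL, starOp_sum, ← Multiset.sum_coe, hds]
    rw [hLsum, ← hsum, ← hsplit, Multiset.sum_add]
  · intro x hx
    rcases Multiset.mem_add.mp hx with h | h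
    · exact (Multiset.mem_filter.mp h).2
    · exact hpos x (Multiset.mem_of_mem_filter h)
  · intro x hx hodd
    show Even (Multiset.count x (((L : Multiset ℕ).filter (fun x => 0 < x)) + sEven))
    rw [Multiset.count_add]
    have hx2 : x % 2 = 1 := Nat.odd_iff.mp hodd
    have hc2 : Multiset.count x sEven = 0 := by
      rw [Multiset.count_eq_zero]
      intro hmem
      have := (Multiset.mem_filter.mp hmem).2
      omega
    have hxpos : 0 < x := by omega
    have hc1 : Multiset.count x ((L : Multiset ℕ).filter (fun x => 0 < x))
        = Multiset.count x (L : Multiset ℕ) := by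
      rw [Multiset.count_filter, if_pos hxpos]
    rw [hc1, hc2, add_zero, Multiset.coe_count]
    exact starOp_count _ hdsodd hsorted hlen x hx2
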